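/- Every finite subgroup of the general linear group GL(2, ℤ) of invertible 2×2 integer matrices is either cyclic or isomorphic to a dihedral group DihedralGroup n for some n ≥ 1. -/

import Mathlib

open Matrix Subgroup

abbrev M2 := Matrix (Fin 2) (Fin 2) ℚ

lemma ch2 (M : M2) : M * M = M.trace • M - M.det • (1 : M2) := by
  ext i j
  simp [Matrix.mul_apply, Matrix.trace_fin_two, Matrix.det_fin_two, Fin.sum_univ_two,
    Matrix.one_apply]
  fin_cases i <;> fin_cases j <;> simp <;> ring

lemma polar (X Y : M2) :
    X * Y + Y * X = X.trace • Y + Y.trace • X + ((X * Y).trace - X.trace * Y.trace) • (1 : M2) := by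
  ext i j
  simp [Matrix.mul_apply, Matrix.trace_fin_two, Fin.sum_univ_two, Matrix.one_apply]
  fin_cases i <;> fin_cases j <;> simp <;> ring

lemma adj_conj (M : M2) :
    M.adjugate = !![0,-1;1,0] * Mᵀ * !![0,1;-1,0] := by
  rw [Matrix.adjugate_fin_two]
  ext i j
  fin_cases i <;> fin_cases j <;>
    simp [Matrix.mul_apply, Matrix.vecMul, dotProduct, Fin.sum_univ_two]

lemma cent (V X : M2) (hV : V 1 1 = - V 0 0) (hq : V 0 1 ≠ 0) (h : X * V = V * X) :
    X = (X 0 0 - (X 0 1 / V 0 1) * V 0 0) • (1 : M2) + (X 0 1 / V 0 1) • V := by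
  have h00 := congrFun (congrFun h 0) 0
  have h01 := congrFun (congrFun h 0) 1
  have h10 := congrFun (congrFun h 1) 0
  have h11 := congrFun (congrFun h 1) 1
  simp [Matrix.mul_apply, Fin.sum_univ_two] at h00 h01 h10 h11
  ext i j
  fin_cases i <;> fin_cases j <;>
    simp [Matrix.one_apply] <;> field_simp <;> nlinarith [h00, h01, h10, h11, hV]

theorem aux_cyclic {G : Type*} [Group G] [Finite G] (f : G →* M2)
    (hinj : Function.Injective f) (V : M2) (hV11 : V 1 1 = -V 0 0) (hq : V 0 1 ≠ 0)
    (hd : 0 < V.det) (hcomm : ∀ g, f g * V = V * f g) : IsCyclic G := by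
  set d : ℚ := V.det with hdd
  have htr : V.trace = 0 := by rw [Matrix.trace_fin_two, hV11]; ring
  have VV : V * V = -(d • (1 : M2)) := by
    rw [ch2 V, htr, zero_smul, zero_sub]
  set α : G → ℚ := fun g => f g 0 0 - (f g 0 1 / V 0 1) * V 0 0 with hα
  set β : G → ℚ := fun g => f g 0 1 / V 0 1 with hβ
  have rep : ∀ g, f g = α g • (1 : M2) + β g • V := fun g => cent V (f g) hV11 hq (hcomm g)
  have uniq : ∀ a b a' b' : ℚ, a • (1 : M2) + b • V = a' • (1 : M2) + b' • V →
      a = a' ∧ b = b' := by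
    intro a b a' b' h
    have h01 := congrFun (congrFun h 0) 1
    have h00 := congrFun (congrFun h 0) 0
    simp [Matrix.add_apply, Matrix.smul_apply, Matrix.one_apply, smul_eq_mul] at h01 h00
    have hb : b = b' := h01.resolve_right hq
    refine ⟨?_, hb⟩
    rw [hb] at h00; linarith
  have key : ∀ a b c e : ℚ, (a • (1 : M2) + b • V) * (c • (1 : M2) + e • V) =
      (a * c - d * (b * e)) • (1 : M2) + (a * e + b * c) • V := by
    intro a b c e
    simp only [add_mul, mul_add, smul_mul_assoc, mul_smul_comm, one_mul, mul_one, VV]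
    module
  have hone : α 1 = 1 ∧ β 1 = 0 := by
    apply uniq
    rw [← rep 1, _root_.map_one]
    rw [one_smul, zero_smul, add_zero]
  have hmul : ∀ g h : G, α (g * h) = α g * α h - d * (β g * β h) ∧
      β (g * h) = α g * β h + β g * α h := by
    intro g h
    apply uniq
    rw [← rep (g * h), _root_.map_mul, rep g, rep h, key]
  have hd0 : (0:ℝ) < (d : ℝ) := by exact_mod_cast hd
  have hs : Real.sqrt d ≠ 0 := by positivity
  have hss : Real.sqrt d * Real.sqrt d = (d : ℝ) := Real.mul_self_sqrt hd0.le
  let c : G →* ℂ :=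
    { toFun := fun g => ⟨(α g : ℝ), (β g : ℝ) * Real.sqrt d⟩
      map_one' := by
        apply Complex.ext <;> simp [hone.1, hone.2]
      map_mul' := by
        intro g h
        apply Complex.ext
        · rw [Complex.mul_re]
          have := (hmul g h).1
          push_cast [this]
          ring_nf
          rw [Real.sq_sqrt hd0.le]
          ring
        · rw [Complex.mul_im]
          have := (hmul g h).2
          push_cast [this]
          ring }
  apply isCyclic_of_subgroup_isDomain c
  intro g h hgh
  have hre : (α g : ℝ) = α h := congrArg Complex.re hgh
  have him : (β g : ℝ) * Real.sqrt d = (β h : ℝ) * Real.sqrt d := congrArg Complex.im hgh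
  have hβe : (β g : ℝ) = β h := mul_right_cancel₀ hs him
  apply hinj
  rw [rep g, rep h]
  rw [show α g = α h from by exact_mod_cast hre, show β g = β h from by exact_mod_cast hβe]

theorem aux_dihedral {G : Type*} [Group G] [Finite G] (D : G →* ℤˣ)
    (hcyc : IsCyclic D.ker) (hinv : ∀ g : G, D g = -1 → g * g = 1) :
    IsCyclic G ∨ ∃ n : ℕ, 1 ≤ n ∧ Nonempty (G ≃* DihedralGroup n) := by
  by_cases hex : ∃ ρ : G, D ρ = -1
  · right
    obtain ⟨ρ, hρ⟩ := hex
    set n : ℕ := Nat.card D.ker with hn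
    have hn1 : 1 ≤ n := Nat.card_pos
    haveI : NeZero n := ⟨by omega⟩
    obtain ⟨g, hg⟩ := IsCyclic.exists_generator (α := D.ker)
    set G₀ : G := (g : G) with hG₀
    have hord : orderOf G₀ = n := by
      rw [hG₀, orderOf_submonoid, orderOf_eq_card_of_forall_mem_zpowers hg]
    have hρ2 : ρ * ρ = 1 := hinv ρ hρ
    have hρi : ρ⁻¹ = ρ := by rw [← mul_eq_one_iff_inv_eq, hρ2]
    have hDG₀ : D G₀ = 1 := g.2
    have hconj : ∀ k : G, D k = 1 → ρ * k * ρ = k⁻¹ := by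
      intro k hk
      have h1 : D (ρ * k) = -1 := by rw [_root_.map_mul, hρ, hk, mul_one]
      have h2 := hinv _ h1
      rw [eq_inv_iff_mul_eq_one]
      calc ρ * k * ρ * k = ρ * k * (ρ * k) := by group
        _ = 1 := h2
    have hcomm : ∀ m : ℕ, G₀ ^ m * ρ = ρ * (G₀ ^ m)⁻¹ := by
      intro m
      have hDm : D (G₀ ^ m) = 1 := by rw [map_pow, hDG₀, one_pow]
      have := hconj _ hDm
      calc G₀ ^ m * ρ = ρ * (ρ * G₀ ^ m * ρ) := by rw [← mul_assoc, ← mul_assoc, hρ2, one_mul]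
        _ = ρ * (G₀ ^ m)⁻¹ := by rw [this]
    have hrmr : ∀ m : ℕ, ρ * G₀ ^ m * ρ = (G₀ ^ m)⁻¹ := by
      intro m
      exact hconj _ (by rw [map_pow, hDG₀, one_pow])
    have hc2 : ∀ a b : ℕ, G₀ ^ a * (G₀ ^ b)⁻¹ = (G₀ ^ b)⁻¹ * G₀ ^ a := by
      intro a b
      rw [← zpow_natCast G₀ a, ← zpow_natCast G₀ b, ← _root_.zpow_neg, ← _root_.zpow_add, ← _root_.zpow_add, add_comm]
    have hpow : ∀ a b : ℕ, a ≡ b [MOD n] → G₀ ^ a = G₀ ^ b := by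
      intro a b hab
      rw [pow_eq_pow_iff_modEq, hord]
      exact hab
    have hadd : ∀ i j : ZMod n, G₀ ^ (i + j).val = G₀ ^ i.val * G₀ ^ j.val := by
      intro i j
      rw [← pow_add]
      apply hpow
      rw [ZMod.val_add]
      exact (Nat.mod_modEq _ n)
    have hsub : ∀ i j : ZMod n, G₀ ^ (j - i).val = G₀ ^ j.val * (G₀ ^ i.val)⁻¹ := by
      intro i j
      rw [eq_mul_inv_iff_mul_eq, ← pow_add]
      apply hpow
      calc ((j - i).val + i.val) ≡ (j - i + i).val [MOD n] := by
            rw [ZMod.val_add]; exact (Nat.mod_modEq _ n).symm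
        _ = j.val := by rw [sub_add_cancel]
    have hzpow : ∀ m : ℤ, G₀ ^ (((m : ZMod n)).val : ℤ) = G₀ ^ m := by
      intro m
      rw [zpow_eq_zpow_iff_modEq, hord, Int.ModEq]
      have : (((m : ZMod n).val : ℤ) : ZMod n) = (m : ZMod n) := by
        push_cast [ZMod.natCast_val]
        simp [ZMod.intCast_cast, ZMod.cast_id]
      rwa [ZMod.intCast_eq_intCast_iff'] at this
    let F : DihedralGroup n → G := fun x =>
      match x with
      | .r i => G₀ ^ i.val
      | .sr i => ρ * G₀ ^ i.val
    have hFmul : ∀ x y : DihedralGroup n, F (x * y) = F x * F y := by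
      rintro (i | i) (j | j)
      · show G₀ ^ (i + j).val = G₀ ^ i.val * G₀ ^ j.val
        exact hadd i j
      · show ρ * G₀ ^ (j - i).val = G₀ ^ i.val * (ρ * G₀ ^ j.val)
        calc ρ * G₀ ^ (j - i).val = ρ * (G₀ ^ j.val * (G₀ ^ i.val)⁻¹) := by rw [hsub]
          _ = ρ * ((G₀ ^ i.val)⁻¹ * G₀ ^ j.val) := by rw [hc2]
          _ = ρ * (G₀ ^ i.val)⁻¹ * G₀ ^ j.val := by rw [mul_assoc]
          _ = G₀ ^ i.val * ρ * G₀ ^ j.val := by rw [hcomm]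
          _ = G₀ ^ i.val * (ρ * G₀ ^ j.val) := by rw [mul_assoc]
      · show ρ * G₀ ^ (i + j).val = ρ * G₀ ^ i.val * G₀ ^ j.val
        rw [hadd, mul_assoc]
      · show G₀ ^ (j - i).val = ρ * G₀ ^ i.val * (ρ * G₀ ^ j.val)
        rw [hsub, show ρ * G₀ ^ i.val * (ρ * G₀ ^ j.val) = ρ * G₀ ^ i.val * ρ * G₀ ^ j.val by
          group, hrmr, ← hc2]
    let Fh : DihedralGroup n →* G := MonoidHom.mk' F hFmul
    have hDpow : ∀ m : ℕ, D (G₀ ^ m) = 1 := fun m => by rw [map_pow, hDG₀, one_pow]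
    have hne : (1 : ℤˣ) ≠ -1 := by decide
    have hinj : Function.Injective Fh := by
      rintro (i | i) (j | j) h
      · have : G₀ ^ i.val = G₀ ^ j.val := h
        rw [pow_eq_pow_iff_modEq, hord, Nat.ModEq, Nat.mod_eq_of_lt (ZMod.val_lt i),
          Nat.mod_eq_of_lt (ZMod.val_lt j)] at this
        exact congrArg DihedralGroup.r (ZMod.val_injective n this)
      · exfalso
        have h3 : G₀ ^ i.val = ρ * G₀ ^ j.val := h
        have e1 := congrArg D h3
        rw [hDpow, _root_.map_mul, hρ, hDpow, mul_one] at e1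
        exact hne e1
      · exfalso
        have h3 : ρ * G₀ ^ i.val = G₀ ^ j.val := h
        have e1 := congrArg D h3
        rw [hDpow, _root_.map_mul, hρ, hDpow, mul_one] at e1
        exact hne e1.symm
      · have : ρ * G₀ ^ i.val = ρ * G₀ ^ j.val := h
        have h2 := mul_left_cancel this
        rw [pow_eq_pow_iff_modEq, hord, Nat.ModEq, Nat.mod_eq_of_lt (ZMod.val_lt i),
          Nat.mod_eq_of_lt (ZMod.val_lt j)] at h2
        exact congrArg DihedralGroup.sr (ZMod.val_injective n h2)
    have hsurj : Function.Surjective Fh := by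
      intro h
      rcases Int.units_eq_one_or (D h) with hD | hD
      · have hmem : h ∈ D.ker := by rwa [MonoidHom.mem_ker]
        obtain ⟨m, hm⟩ := hg ⟨h, hmem⟩
        refine ⟨DihedralGroup.r (m : ZMod n), ?_⟩
        show G₀ ^ ((m : ZMod n)).val = h
        have : G₀ ^ (((m : ZMod n)).val : ℤ) = G₀ ^ m := hzpow m
        rw [zpow_natCast] at this
        rw [this]
        have := congrArg (Subgroup.subtype D.ker) hm
        simpa [hG₀] using this
      · have hmem : ρ * h ∈ D.ker := by
          rw [MonoidHom.mem_ker, _root_.map_mul, hρ, hD]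
          decide
        obtain ⟨m, hm⟩ := hg ⟨ρ * h, hmem⟩
        refine ⟨DihedralGroup.sr (m : ZMod n), ?_⟩
        show ρ * G₀ ^ ((m : ZMod n)).val = h
        have h1 : G₀ ^ (((m : ZMod n)).val : ℤ) = G₀ ^ m := hzpow m
        rw [zpow_natCast] at h1
        rw [h1]
        have h2 := congrArg (Subgroup.subtype D.ker) hm
        simp [hG₀] at h2
        rw [h2, ← mul_assoc, hρ2, one_mul]
    exact ⟨n, hn1, ⟨(MulEquiv.ofBijective Fh ⟨hinj, hsurj⟩).symm⟩⟩
  · left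
    push_neg at hex
    have hker : D.ker = ⊤ := by
      ext x
      simp only [MonoidHom.mem_ker, Subgroup.mem_top, iff_true]
      rcases Int.units_eq_one_or (D x) with h | h
      · exact h
      · exact absurd h (hex x)
    have : IsCyclic (⊤ : Subgroup G) := hker ▸ hcyc
    exact isCyclic_of_surjective (Subgroup.topEquiv : (⊤ : Subgroup G) ≃* G)
      Subgroup.topEquiv.surjective

/-- Every finite subgroup of `GL(2, ℤ)` is either cyclic or isomorphic to a dihedral group
`DihedralGroup n` for some `n ≥ 1`. -/
theorem finite_subgroup_GL2Z_cyclic_or_dihedral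
    (H : Subgroup (Matrix.GeneralLinearGroup (Fin 2) ℤ)) (hH : Finite H) :
    IsCyclic H ∨ ∃ n : ℕ, 1 ≤ n ∧ Nonempty (H ≃* DihedralGroup n) := by
  classical
  have : Fintype H := Fintype.ofFinite H
  -- the embedding of H into rational 2×2 matrices
  let φ : H →* M2 :=
    ((Int.castRingHom ℚ).mapMatrix.toMonoidHom.comp
      (Units.coeHom (Matrix (Fin 2) (Fin 2) ℤ))).comp H.subtype
  have φinj : Function.Injective φ := by
    intro a b hab
    apply Subtype.ext
    apply Units.ext
    apply Matrix.map_injective (f := (Int.cast : ℤ → ℚ)) (fun x y hxy => by exact_mod_cast hxy)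
    exact hab
  -- the determinant homomorphism
  let D : H →* ℤˣ := (Matrix.GeneralLinearGroup.det).comp H.subtype
  have hdetφ : ∀ k : H, (φ k).det = ((D k : ℤ) : ℚ) := by
    intro k
    show ((Int.castRingHom ℚ).mapMatrix ((k : Matrix.GeneralLinearGroup (Fin 2) ℤ) :
      Matrix (Fin 2) (Fin 2) ℤ)).det = _
    rw [← RingHom.map_det]
    rfl
  -- the averaged positive definite form
  let P : M2 := ∑ h : H, (φ h)ᵀ * (φ h)
  have hPinv : ∀ k : H, (φ k)ᵀ * P * (φ k) = P := by
    intro k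
    have : (φ k)ᵀ * P * (φ k) = ∑ h : H, (φ (h * k))ᵀ * (φ (h * k)) := by
      rw [Finset.mul_sum, Finset.sum_mul]
      exact Finset.sum_congr rfl fun h _ => by
        simp only [_root_.map_mul, Matrix.transpose_mul, mul_assoc]
    rw [this]
    exact Fintype.sum_equiv (Equiv.mulRight k) _ _ fun h => rfl
  have hPsym : P 1 0 = P 0 1 := by
    simp only [P, Matrix.sum_apply]
    refine Finset.sum_congr rfl fun h _ => ?_
    simp [Matrix.mul_apply, Fin.sum_univ_two, Matrix.transpose_apply]
    ring
  have hA : P 0 0 = ∑ h : H, ((φ h) 0 0 ^ 2 + (φ h) 1 0 ^ 2) := by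
    simp only [P, Matrix.sum_apply]
    refine Finset.sum_congr rfl fun h _ => ?_
    simp [Matrix.mul_apply, Fin.sum_univ_two, Matrix.transpose_apply]
    ring
  have hB : P 0 1 = ∑ h : H, ((φ h) 0 0 * (φ h) 0 1 + (φ h) 1 0 * (φ h) 1 1) := by
    simp only [P, Matrix.sum_apply]
    refine Finset.sum_congr rfl fun h _ => ?_
    simp [Matrix.mul_apply, Fin.sum_univ_two, Matrix.transpose_apply]
  have hC : P 1 1 = ∑ h : H, ((φ h) 0 1 ^ 2 + (φ h) 1 1 ^ 2) := by
    simp only [P, Matrix.sum_apply]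
    refine Finset.sum_congr rfl fun h _ => ?_
    simp [Matrix.mul_apply, Fin.sum_univ_two, Matrix.transpose_apply]
    ring
  have hφ1 : φ (1 : H) = 1 := map_one φ
  have hApos : (1:ℚ) ≤ P 0 0 := by
    rw [hA]
    have := Finset.single_le_sum (f := fun h : H => ((φ h) 0 0 ^ 2 + (φ h) 1 0 ^ 2))
      (fun i _ => by positivity) (Finset.mem_univ 1)
    simpa [hφ1, Matrix.one_apply] using this
  have hdetP : 0 < P.det := by
    set A := P 0 0 with hA'
    set B := P 0 1 with hB'
    set C := P 1 1 with hC'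
    have key : A * P.det = ∑ h : H,
        ((-B * (φ h) 0 0 + A * (φ h) 0 1) ^ 2 + (-B * (φ h) 1 0 + A * (φ h) 1 1) ^ 2) := by
      have expand : ∀ h : H,
          ((-B * (φ h) 0 0 + A * (φ h) 0 1) ^ 2 + (-B * (φ h) 1 0 + A * (φ h) 1 1) ^ 2)
          = B^2 * ((φ h) 0 0 ^ 2 + (φ h) 1 0 ^ 2)
            - 2*A*B * ((φ h) 0 0 * (φ h) 0 1 + (φ h) 1 0 * (φ h) 1 1)
            + A^2 * ((φ h) 0 1 ^ 2 + (φ h) 1 1 ^ 2) := fun h => by ring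
      calc A * P.det = B^2 * A - 2*A*B*B + A^2*C := by
            rw [Matrix.det_fin_two, hPsym, ← hA', ← hB', ← hC']; ring
        _ = B^2 * (∑ h : H, ((φ h) 0 0 ^ 2 + (φ h) 1 0 ^ 2))
            - 2*A*B * (∑ h : H, ((φ h) 0 0 * (φ h) 0 1 + (φ h) 1 0 * (φ h) 1 1))
            + A^2 * (∑ h : H, ((φ h) 0 1 ^ 2 + (φ h) 1 1 ^ 2)) := by
            rw [← hA, ← hB, ← hC]
        _ = _ := by
            rw [Finset.mul_sum, Finset.mul_sum, Finset.mul_sum, ← Finset.sum_sub_distrib,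
              ← Finset.sum_add_distrib]
            exact Finset.sum_congr rfl fun h _ => (expand h).symm
    have hge : A^2 ≤ A * P.det := by
      rw [key]
      have := Finset.single_le_sum
        (f := fun h : H => ((-B * (φ h) 0 0 + A * (φ h) 0 1) ^ 2
          + (-B * (φ h) 1 0 + A * (φ h) 1 1) ^ 2))
        (fun i _ => by positivity) (Finset.mem_univ 1)
      have h1 : ((-B * (φ (1:H)) 0 0 + A * (φ (1:H)) 0 1) ^ 2
          + (-B * (φ (1:H)) 1 0 + A * (φ (1:H)) 1 1) ^ 2) = B^2 + A^2 := by
        rw [hφ1]; simp [Matrix.one_apply]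
      rw [h1] at this
      nlinarith [this]
    nlinarith [hApos, hge]
  -- the skew companion matrix
  let J : M2 := !![0,1;-1,0]
  let Jinv : M2 := !![0,-1;1,0]
  have hJJ : J * Jinv = 1 := by
    ext i j
    fin_cases i <;> fin_cases j <;> simp [J, Jinv, Matrix.mul_apply, Fin.sum_univ_two]
  let V : M2 := P * Jinv
  have hV01 : V 0 1 = -(P 0 0) := by
    simp [V, Jinv, Matrix.mul_apply, Fin.sum_univ_two]
  have hV00 : V 0 0 = P 0 1 := by
    simp [V, Jinv, Matrix.mul_apply, Fin.sum_univ_two]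
  have hV11 : V 1 1 = -V 0 0 := by
    simp [V, Jinv, Matrix.mul_apply, Fin.sum_univ_two, hPsym, hV00]
  have hq : V 0 1 ≠ 0 := by rw [hV01]; intro h; nlinarith [hApos]
  have hdV : 0 < V.det := by
    have : V.det = P.det * Jinv.det := Matrix.det_mul _ _
    rw [this]
    have : Jinv.det = 1 := by simp [Jinv, Matrix.det_fin_two]
    rw [this, mul_one]
    exact hdetP
  -- the master relation
  have master : ∀ k : H, ((D k : ℤ) : ℚ) • ((φ k)ᵀ * V) = V * (φ k)ᵀ := by
    intro k
    set M := φ k with hM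
    have e1 : Mᵀ * P * (M * M.adjugate) = P * M.adjugate := by
      rw [← mul_assoc, hPinv]
    rw [Matrix.mul_adjugate, adj_conj, hdetφ] at e1
    -- e1 : Mᵀ * P * (det • 1) = P * (Jinv * Mᵀ * J)
    have e2 : ((D k : ℤ) : ℚ) • (Mᵀ * P) = P * Jinv * Mᵀ * J := by
      calc ((D k : ℤ) : ℚ) • (Mᵀ * P) = Mᵀ * P * (((D k : ℤ) : ℚ) • 1) := by
            rw [mul_smul_comm, mul_one]
        _ = P * (Jinv * Mᵀ * J) := e1
        _ = P * Jinv * Mᵀ * J := by rw [← mul_assoc, ← mul_assoc]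
    calc ((D k : ℤ) : ℚ) • (Mᵀ * V) = ((D k : ℤ) : ℚ) • (Mᵀ * P) * Jinv := by
          rw [smul_mul_assoc, mul_assoc]
      _ = P * Jinv * Mᵀ * J * Jinv := by rw [e2]
      _ = P * Jinv * Mᵀ * (J * Jinv) := by rw [mul_assoc (P * Jinv * Mᵀ) J Jinv]
      _ = V * Mᵀ := by rw [hJJ, mul_one]
  -- commutation for determinant-one elements
  have hcomm1 : ∀ k : H, D k = 1 → (φ k)ᵀ * V = V * (φ k)ᵀ := by
    intro k hk
    have := master k
    rwa [hk, Units.val_one, Int.cast_one, one_smul] at this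
  -- involution for determinant-minus-one elements
  have hinv : ∀ k : H, D k = -1 → k * k = 1 := by
    intro k hk
    have hm := master k
    rw [hk] at hm
    have hm' : -((φ k)ᵀ * V) = V * (φ k)ᵀ := by
      rw [← hm]
      norm_num
    have hsum : (φ k)ᵀ * V + V * (φ k)ᵀ = 0 := by rw [← hm']; exact add_neg_cancel _
    have hVtr : V.trace = 0 := by
      rw [Matrix.trace_fin_two, hV11]; ring
    have hp := polar ((φ k)ᵀ) V
    rw [hsum, hVtr] at hp
    -- 0 = tr(Mᵀ) • V + 0 • Mᵀ + (tr(MᵀV) - tr(Mᵀ)*0) • 1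
    have hp' : (0 : M2) = (φ k)ᵀ.trace • V + (((φ k)ᵀ * V).trace) • (1 : M2) := by
      rw [hp]; simp
    have h01 := congrFun (congrFun hp' 0) 1
    simp [Matrix.add_apply, Matrix.smul_apply, Matrix.one_apply, smul_eq_mul] at h01
    have htrM : (φ k).trace = 0 := h01.resolve_right hq
    have hM2 : φ k * φ k = 1 := by
      rw [ch2, htrM, hdetφ, hk]
      push_cast
      simp
    apply φinj
    rw [_root_.map_mul, hM2, _root_.map_one]
  -- cyclicity of the kernel
  have hcyc : IsCyclic D.ker := by
    let f : D.ker →* M2 :=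
      { toFun := fun k => (φ ((k : H)⁻¹))ᵀ
        map_one' := by simp
        map_mul' := by
          intro a b
          show (φ (((a : H) * (b : H))⁻¹))ᵀ = (φ ((a : H)⁻¹))ᵀ * (φ ((b : H)⁻¹))ᵀ
          rw [_root_.mul_inv_rev, _root_.map_mul, Matrix.transpose_mul] }
    apply aux_cyclic f ?_ V hV11 hq hdV
    · intro g
      show (φ ((g : H)⁻¹))ᵀ * V = V * (φ ((g : H)⁻¹))ᵀ
      apply hcomm1
      rw [map_inv]
      have : D (g : H) = 1 := g.2
      rw [this, inv_one]
    · intro a b hab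
      have hab' : (φ ((a : H)⁻¹))ᵀ = (φ ((b : H)⁻¹))ᵀ := hab
      have h2 : φ ((a : H)⁻¹) = φ ((b : H)⁻¹) := by
        rw [← Matrix.transpose_transpose (φ ((a : H)⁻¹)), hab', Matrix.transpose_transpose]
      exact Subtype.ext (inv_injective (φinj h2))
  exact aux_dihedral D hcyc hinv
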